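/- Let λ, ε > 0, μ = √(λ(λε² + 2)), w₊ = λε² + με + 1 and w₋ = λε² − με + 1. Suppose f, g : ℝ \ {0} → ℝ are Lebesgue integrable, differentiable on (−∞,0) and on (0,∞), and satisfy for all x ∈ ℝ \ {0}: (λε² + 1)·f(x) + ε·f'(x) = g(x) and (λε² + 1)·g(x) − ε·g'(x) = f(x). Then there exist constants c₁, c₂ ∈ ℝ such that f(x) = c₁ e^{μx} for x < 0, f(x) = c₂ e^{−μx} for x > 0, g(x) = c₁ w₊ e^{μx} for x < 0, and g(x) = c₂ w₋ e^{−μx} for x > 0. -/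

import Mathlib

open MeasureTheory Real Filter

lemma constAux (F : ℝ → ℝ) (a b : ℝ) (hab : a ≤ b)
    (hd : ∀ x ∈ Set.Icc a b, HasDerivAt F 0 x) : F b = F a := by
  have h := constant_of_has_deriv_right_zero (f := F) (a := a) (b := b)
    (fun x hx => (hd x hx).continuousAt.continuousWithinAt)
    (fun x hx => ((hd x (Set.Ico_subset_Icc_self hx)).hasDerivWithinAt))
  exact h b (Set.right_mem_Icc.2 hab)

lemma constOnIoi (F : ℝ → ℝ) (hd : ∀ x ∈ Set.Ioi (0:ℝ), HasDerivAt F 0 x) :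
    ∀ x ∈ Set.Ioi (0:ℝ), F x = F 1 := by
  intro x hx
  rcases le_total x 1 with h | h
  · exact (constAux F x 1 h (fun y hy => hd y (lt_of_lt_of_le hx hy.1))).symm
  · exact constAux F 1 x h (fun y hy => hd y (lt_of_lt_of_le one_pos hy.1))

lemma constOnIio (F : ℝ → ℝ) (hd : ∀ x ∈ Set.Iio (0:ℝ), HasDerivAt F 0 x) :
    ∀ x ∈ Set.Iio (0:ℝ), F x = F (-1) := by
  intro x hx
  rcases le_total x (-1) with h | h
  · exact (constAux F x (-1) h (fun y hy => lt_of_le_of_lt hy.2 (by norm_num) |> hd y)).symm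
  · exact constAux F (-1) x h (fun y hy => hd y (lt_of_le_of_lt hy.2 hx))

lemma coeffZero (μ : ℝ) (hμ : 0 < μ) (B A : ℝ) (f : ℝ → ℝ) (hf : Integrable f)
    (h : ∀ x > (0:ℝ), f x = B * Real.exp (μ * x) + A * Real.exp (-(μ * x))) : B = 0 := by
  by_contra hB
  have hB' : 0 < |B| := abs_pos.2 hB
  have h1 : Tendsto (fun x : ℝ => |B| * Real.exp (μ * x)) atTop atTop := by
    apply Tendsto.const_mul_atTop hB'
    exact Real.tendsto_exp_atTop.comp (Tendsto.const_mul_atTop hμ tendsto_id)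
  have h2 : ∀ᶠ x in atTop, |A| + 1 ≤ |B| * Real.exp (μ * x) := h1.eventually_ge_atTop _
  obtain ⟨x₀, hx₀⟩ := eventually_atTop.1 h2
  set x₁ := max x₀ 1 with hx₁
  have key : ∀ x ≥ x₁, 1 ≤ ‖f x‖ := by
    intro x hx
    have hxpos : (0:ℝ) < x := lt_of_lt_of_le one_pos (le_trans (le_max_right _ _) hx)
    have hfx := h x hxpos
    have hle : |A| + 1 ≤ |B| * Real.exp (μ * x) := hx₀ x (le_trans (le_max_left _ _) hx)
    have hexpA : |A| * Real.exp (-(μ * x)) ≤ |A| := by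
      have : Real.exp (-(μ * x)) ≤ 1 := Real.exp_le_one_iff.2 (by nlinarith)
      nlinarith [abs_nonneg A, Real.exp_pos (-(μ * x))]
    have : 1 ≤ |f x| := by
      have h3 : |B * Real.exp (μ * x)| ≤ |f x| + |A * Real.exp (-(μ * x))| := by
        have heq : B * Real.exp (μ * x) = f x + -(A * Real.exp (-(μ * x))) := by
          rw [hfx]; ring
        rw [heq]
        simpa using abs_add_le (f x) (-(A * Real.exp (-(μ * x))))
      rw [abs_mul, abs_mul, Real.abs_exp, Real.abs_exp] at h3
      nlinarith
    simpa [Real.norm_eq_abs] using this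
  have hsub : Set.Ici x₁ ⊆ {x | 1 ≤ |f x|} := fun x hx => by
    simpa [Real.norm_eq_abs] using key x hx
  have hfin := hf.abs.measure_ge_lt_top one_pos
  have : (volume (Set.Ici x₁)) ≤ volume {x | 1 ≤ |f x|} := measure_mono hsub
  rw [Real.volume_Ici] at this
  exact absurd (lt_of_le_of_lt this hfin) (by simp)

lemma solve_exp (u C k : ℝ) (h : u * Real.exp k = C) : u = C * Real.exp (-k) := by
  rw [← h, mul_assoc, ← Real.exp_add]; simp

theorem stmt6 (l ε : ℝ) (hl : 0 < l) (hε : 0 < ε) (μ wp wm : ℝ)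
    (hμ : μ = Real.sqrt (l * (l * ε^2 + 2)))
    (hwp : wp = l * ε^2 + μ * ε + 1) (hwm : wm = l * ε^2 - μ * ε + 1)
    (f g f' g' : ℝ → ℝ) (hf : Integrable f) (hg : Integrable g)
    (hdf : ∀ x : ℝ, x ≠ 0 → HasDerivAt f (f' x) x)
    (hdg : ∀ x : ℝ, x ≠ 0 → HasDerivAt g (g' x) x)
    (heq1 : ∀ x : ℝ, x ≠ 0 → (l * ε^2 + 1) * f x + ε * f' x = g x)
    (heq2 : ∀ x : ℝ, x ≠ 0 → (l * ε^2 + 1) * g x - ε * g' x = f x) :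
    ∃ c₁ c₂ : ℝ,
      (∀ x < (0:ℝ), f x = c₁ * Real.exp (μ * x)) ∧
      (∀ x > (0:ℝ), f x = c₂ * Real.exp (-(μ * x))) ∧
      (∀ x < (0:ℝ), g x = c₁ * wp * Real.exp (μ * x)) ∧
      (∀ x > (0:ℝ), g x = c₂ * wm * Real.exp (-(μ * x))) := by
  have harg : 0 < l * (l * ε^2 + 2) := by
    have h2 : 0 < l * ε^2 + 2 := by positivity
    exact mul_pos hl h2
  have hμpos : 0 < μ := by rw [hμ]; exact Real.sqrt_pos.2 harg
  have hμ2 : μ^2 = l * (l * ε^2 + 2) := by rw [hμ, Real.sq_sqrt harg.le]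
  subst hwp hwm
  set wp := l * ε^2 + μ * ε + 1 with hwp
  set wm := l * ε^2 - μ * ε + 1 with hwm
  have h2με : (0:ℝ) < 2 * μ * ε := by positivity
  have h2ne : (2 * μ * ε) ≠ 0 := ne_of_gt h2με
  -- derivative identities
  have hu' : ∀ x : ℝ, x ≠ 0 → g' x - wp * f' x = -μ * (g x - wp * f x) := by
    intro x hx
    have e1 := heq1 x hx
    have e2 := heq2 x hx
    have key : ε * (g' x - wp * f' x) = ε * (-μ * (g x - wp * f x)) := by
      rw [hwp]
      linear_combination (-1) * e2 - (l*ε^2 + μ*ε + 1) * e1 - (f x) * ε^2 * hμ2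
    exact mul_left_cancel₀ hε.ne' key
  have hv' : ∀ x : ℝ, x ≠ 0 → g' x - wm * f' x = μ * (g x - wm * f x) := by
    intro x hx
    have e1 := heq1 x hx
    have e2 := heq2 x hx
    have key : ε * (g' x - wm * f' x) = ε * (μ * (g x - wm * f x)) := by
      rw [hwm]
      linear_combination (-1) * e2 - (l*ε^2 - μ*ε + 1) * e1 - (f x) * ε^2 * hμ2
    exact mul_left_cancel₀ hε.ne' key
  -- the "constant" functions
  have hFu : ∀ x : ℝ, x ≠ 0 →
      HasDerivAt (fun y => (g y - wp * f y) * Real.exp (μ * y)) 0 x := by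
    intro x hx
    have hu : HasDerivAt (fun y => g y - wp * f y) (g' x - wp * f' x) x :=
      (hdg x hx).sub ((hdf x hx).const_mul wp)
    have hE : HasDerivAt (fun y => Real.exp (μ * y)) (Real.exp (μ * x) * (μ * 1)) x :=
      ((hasDerivAt_id x).const_mul μ).exp
    have := hu.mul hE
    refine this.congr_deriv ?_
    rw [hu' x hx]; ring
  have hFv : ∀ x : ℝ, x ≠ 0 →
      HasDerivAt (fun y => (g y - wm * f y) * Real.exp (-(μ * y))) 0 x := by
    intro x hx
    have hv : HasDerivAt (fun y => g y - wm * f y) (g' x - wm * f' x) x :=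
      (hdg x hx).sub ((hdf x hx).const_mul wm)
    have hE : HasDerivAt (fun y => Real.exp (-(μ * y))) (Real.exp (-(μ * x)) * (-(μ * 1))) x :=
      (((hasDerivAt_id x).const_mul μ).neg).exp
    have := hv.mul hE
    refine this.congr_deriv ?_
    rw [hv' x hx]; ring
  -- positive side
  set Ap := (g 1 - wp * f 1) * Real.exp (μ * 1) with hAp
  set Bp := (g 1 - wm * f 1) * Real.exp (-(μ * 1)) with hBp
  have huP : ∀ x > (0:ℝ), g x - wp * f x = Ap * Real.exp (-(μ * x)) := by
    intro x hx
    have hc := constOnIoi _ (fun y hy => hFu y (ne_of_gt hy)) x hx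
    rw [hAp]
    exact solve_exp _ _ _ hc
  have hvP : ∀ x > (0:ℝ), g x - wm * f x = Bp * Real.exp (μ * x) := by
    intro x hx
    have hc := constOnIoi _ (fun y hy => hFv y (ne_of_gt hy)) x hx
    have h := solve_exp _ _ _ hc
    rw [hBp]
    simpa [neg_neg] using h
  have hfP : ∀ x > (0:ℝ), f x = (Bp / (2*μ*ε)) * Real.exp (μ * x)
      + (-Ap / (2*μ*ε)) * Real.exp (-(μ * x)) := by
    intro x hx
    have h1 := huP x hx
    have h2 := hvP x hx
    have hmul : (2*μ*ε) * f x = Bp * Real.exp (μ * x) - Ap * Real.exp (-(μ * x)) := by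
      have hw : (wp - wm) * f x = (g x - wm * f x) - (g x - wp * f x) := by ring
      rw [h1, h2] at hw
      have hwdiff : wp - wm = 2*μ*ε := by rw [hwp, hwm]; ring
      rw [hwdiff] at hw
      linarith [hw]
    field_simp
    linear_combination hmul
  have hBp0 : Bp = 0 := by
    have h0 := coeffZero μ hμpos (Bp / (2*μ*ε)) (-Ap / (2*μ*ε)) f hf hfP
    rcases div_eq_zero_iff.1 h0 with h | h
    · exact h
    · exact absurd h h2ne
  -- negative side
  set Am := (g (-1) - wp * f (-1)) * Real.exp (μ * (-1)) with hAm
  set Bm := (g (-1) - wm * f (-1)) * Real.exp (-(μ * (-1))) with hBm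
  have huM : ∀ x < (0:ℝ), g x - wp * f x = Am * Real.exp (-(μ * x)) := by
    intro x hx
    have hc := constOnIio _ (fun y hy => hFu y (ne_of_lt hy)) x hx
    rw [hAm]
    exact solve_exp _ _ _ hc
  have hvM : ∀ x < (0:ℝ), g x - wm * f x = Bm * Real.exp (μ * x) := by
    intro x hx
    have hc := constOnIio _ (fun y hy => hFv y (ne_of_lt hy)) x hx
    have h := solve_exp _ _ _ hc
    rw [hBm]
    simpa [neg_neg] using h
  have hfM : ∀ x < (0:ℝ), f x = (Bm / (2*μ*ε)) * Real.exp (μ * x)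
      + (-Am / (2*μ*ε)) * Real.exp (-(μ * x)) := by
    intro x hx
    have h1 := huM x hx
    have h2 := hvM x hx
    have hmul : (2*μ*ε) * f x = Bm * Real.exp (μ * x) - Am * Real.exp (-(μ * x)) := by
      have hw : (wp - wm) * f x = (g x - wm * f x) - (g x - wp * f x) := by ring
      rw [h1, h2] at hw
      have hwdiff : wp - wm = 2*μ*ε := by rw [hwp, hwm]; ring
      rw [hwdiff] at hw
      linarith [hw]
    field_simp
    linear_combination hmul
  have hAm0 : Am = 0 := by
    have hFneg : Integrable (fun y => f (-y)) := hf.comp_neg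
    have hform : ∀ y > (0:ℝ), f (-y) = (-Am / (2*μ*ε)) * Real.exp (μ * y)
        + (Bm / (2*μ*ε)) * Real.exp (-(μ * y)) := by
      intro y hy
      have h := hfM (-y) (by linarith)
      rw [show μ * -y = -(μ*y) by ring, neg_neg] at h
      rw [h]; ring
    have h0 := coeffZero μ hμpos (-Am / (2*μ*ε)) (Bm / (2*μ*ε)) _ hFneg hform
    rcases div_eq_zero_iff.1 h0 with h | h
    · linarith [h]
    · exact absurd h h2ne
  -- conclude
  refine ⟨Bm / (2*μ*ε), -Ap / (2*μ*ε), ?_, ?_, ?_, ?_⟩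
  · intro x hx
    rw [hfM x hx, hAm0]; ring
  · intro x hx
    rw [hfP x hx, hBp0]; ring
  · intro x hx
    have h1 := huM x hx
    rw [hAm0, zero_mul] at h1
    have hgx : g x = wp * f x := by linarith
    rw [hgx, hfM x hx, hAm0]; ring
  · intro x hx
    have h1 := hvP x hx
    rw [hBp0, zero_mul] at h1
    have hgx : g x = wm * f x := by linarith
    rw [hgx, hfP x hx, hBp0]; ring
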